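/- Let φ : [0,1]^d → ℝ^N be twice continuously differentiable, let θ ∈ ℝ^N and c ∈ ℝ, and let q_θ(x) = exp(⟨θ, φ(x)⟩ + c) be strictly positive on [0,1]^d. Then for every x ∈ [0,1]^d the bounded-domain Hyvärinen score satisfies h(x, q_θ) = (1/2) θᵀ Ã(x) θ + K(x)ᵀ θ, where a_i(x) := x_i(1−x_i) ∂_i φ(x), Ã(x) := Σ_{i=1}^d a_i(x) a_i(x)ᵀ, and K(x) := Σ_{i=1}^d [ −2(2x_i−1) x_i(1−x_i) ∂_i φ(x) + x_i²(1−x_i)² ∂_i² φ(x) ]. In particular θ ↦ h(x, q_θ) is a positive-semidefinite quadratic form plus a linear term in θ. (Second part of Proposition 1.) -/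

import Mathlib

/-- Partial derivative in coordinate `i`, taken within the cube `[0,1]^d`. -/
noncomputable def pdW {d : ℕ} (i : Fin d) (f : (Fin d → ℝ) → ℝ) (x : Fin d → ℝ) : ℝ :=
  fderivWithin ℝ f (Set.Icc 0 1) x (Pi.single i 1)

/-- Bounded-domain Hyvärinen score on `[0,1]^d`:
`h(x,q) = ∑ i [ (1/2) x_i²(1−x_i)² (∂_i log q)² − 2(2x_i−1)x_i(1−x_i) ∂_i log q
  + x_i²(1−x_i)² ∂_i² log q ]`. -/
noncomputable def hScoreW {d : ℕ} (q : (Fin d → ℝ) → ℝ) (x : Fin d → ℝ) : ℝ :=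
  ∑ i : Fin d,
    ((1/2) * (x i)^2 * (1 - x i)^2 * (pdW i (fun y => Real.log (q y)) x)^2
      - 2 * (2 * x i - 1) * (x i) * (1 - x i) * pdW i (fun y => Real.log (q y)) x
      + (x i)^2 * (1 - x i)^2 * pdW i (pdW i (fun y => Real.log (q y))) x)

open Finset

lemma cubeUD {d : ℕ} : UniqueDiffOn ℝ (Set.Icc (0 : Fin d → ℝ) 1) := by
  apply uniqueDiffOn_convex (convex_Icc _ _)
  rw [← Set.pi_univ_Icc, interior_pi_set Set.finite_univ]
  refine ⟨fun _ => 1/2, ?_⟩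
  intro i _
  simp only [Pi.zero_apply, Pi.one_apply, interior_Icc, Set.mem_Ioo]
  norm_num

lemma swap3 {d N : ℕ} (f : Fin N → Fin N → Fin d → ℝ) :
    ∑ a, ∑ b, ∑ i, f a b i = ∑ i, ∑ a, ∑ b, f a b i := by
  calc ∑ a, ∑ b, ∑ i, f a b i = ∑ a, ∑ i, ∑ b, f a b i :=
        Finset.sum_congr rfl fun _ _ => Finset.sum_comm
    _ = ∑ i, ∑ a, ∑ b, f a b i := Finset.sum_comm

lemma bigalg {d N : ℕ} (x : Fin d → ℝ) (θ : Fin N → ℝ) (p s : Fin d → Fin N → ℝ) :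
    ∑ i, ((1/2) * (x i)^2 * (1 - x i)^2 * (∑ a, θ a * p i a)^2
        - 2 * (2 * x i - 1) * (x i) * (1 - x i) * (∑ a, θ a * p i a)
        + (x i)^2 * (1 - x i)^2 * (∑ a, θ a * s i a))
    = (1/2) * (∑ a, ∑ b, θ a * (∑ i, (x i * (1 - x i) * p i a) * (x i * (1 - x i) * p i b)) * θ b)
      + ∑ a, (∑ i, (-2 * (2 * x i - 1) * (x i) * (1 - x i) * p i a
          + (x i)^2 * (1 - x i)^2 * s i a)) * θ a := by
  have h1 : ∀ i : Fin d, (∑ a, θ a * p i a)^2 = ∑ a, ∑ b, (θ a * p i a) * (θ b * p i b) := by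
    intro i; rw [sq, Finset.sum_mul_sum]
  simp only [h1, Finset.mul_sum, Finset.sum_mul, Finset.sum_add_distrib, Finset.sum_sub_distrib]
  rw [swap3]
  simp only [add_mul, Finset.sum_mul, Finset.sum_add_distrib]
  have sc : ∀ (g : Fin N → Fin d → ℝ), ∑ a, ∑ i, g a i = ∑ i, ∑ a, g a i :=
    fun g => Finset.sum_comm
  rw [sc, sc]
  rw [← Finset.sum_sub_distrib, ← Finset.sum_add_distrib, ← Finset.sum_add_distrib,
    ← Finset.sum_add_distrib]
  refine Finset.sum_congr rfl fun i _ => ?_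
  have e1 : ∑ a, ∑ b, 1 / 2 * x i ^ 2 * (1 - x i) ^ 2 * (θ a * p i a * (θ b * p i b))
      = ∑ a, ∑ b, 1 / 2 * (θ a * (x i * (1 - x i) * p i a * (x i * (1 - x i) * p i b)) * θ b) :=
    Finset.sum_congr rfl fun _ _ => Finset.sum_congr rfl fun _ _ => by ring
  have e2 : ∑ a, 2 * (2 * x i - 1) * x i * (1 - x i) * (θ a * p i a)
      = -∑ a, -2 * (2 * x i - 1) * x i * (1 - x i) * p i a * θ a := by
    rw [← Finset.sum_neg_distrib]
    exact Finset.sum_congr rfl fun _ _ => by ring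
  have e3 : ∑ a, x i ^ 2 * (1 - x i) ^ 2 * (θ a * s i a)
      = ∑ a, x i ^ 2 * (1 - x i) ^ 2 * s i a * θ a :=
    Finset.sum_congr rfl fun _ _ => by ring
  rw [e1, e2, e3]
  ring


section deriv
variable {d N : ℕ} (φ : (Fin d → ℝ) → Fin N → ℝ)
  (hφ : ContDiffOn ℝ 2 φ (Set.Icc 0 1)) (θ : Fin N → ℝ) (c : ℝ)

include hφ

lemma key1 (i : Fin d) :
    ∀ y ∈ Set.Icc (0 : Fin d → ℝ) 1,
      pdW i (fun z => Real.log (Real.exp ((∑ a : Fin N, θ a * φ z a) + c))) y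
        = ∑ a : Fin N, θ a * pdW i (fun z => φ z a) y := by
  intro y hy
  have hU : UniqueDiffWithinAt ℝ (Set.Icc (0 : Fin d → ℝ) 1) y := cubeUD y hy
  have hd1 : ∀ a : Fin N, DifferentiableOn ℝ (fun z => φ z a) (Set.Icc 0 1) := fun a =>
    ((contDiffOn_pi.mp hφ) a).differentiableOn (by norm_num)
  simp only [pdW, Real.log_exp]
  rw [fderivWithin_add_const, fderivWithin_fun_sum hU
    (fun a _ => ((hd1 a) y hy).const_mul (θ a))]
  simp only [ContinuousLinearMap.coe_sum', Finset.sum_apply]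
  refine Finset.sum_congr rfl fun a _ => ?_
  rw [fderivWithin_const_mul hU ((hd1 a) y hy)]
  simp

lemma hpd (i : Fin d) (a : Fin N) :
    DifferentiableOn ℝ (fun y => pdW i (fun z => φ z a) y) (Set.Icc 0 1) := by
  have h2 : ContDiffOn ℝ 2 (fun z => φ z a) (Set.Icc 0 1) := (contDiffOn_pi.mp hφ) a
  have h1 : ContDiffOn ℝ 1 (fun y => fderivWithin ℝ (fun z => φ z a) (Set.Icc 0 1) y)
      (Set.Icc 0 1) := h2.fderivWithin cubeUD (by norm_num)
  exact (h1.clm_apply contDiffOn_const).differentiableOn (by norm_num)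

lemma key2 (i : Fin d) {x : Fin d → ℝ} (hx : x ∈ Set.Icc (0 : Fin d → ℝ) 1) :
    pdW i (pdW i (fun z => Real.log (Real.exp ((∑ a : Fin N, θ a * φ z a) + c)))) x
      = ∑ a : Fin N, θ a * pdW i (pdW i (fun z => φ z a)) x := by
  have hU : UniqueDiffWithinAt ℝ (Set.Icc (0 : Fin d → ℝ) 1) x := cubeUD x hx
  conv_lhs => rw [pdW]
  rw [fderivWithin_congr (key1 φ hφ θ c i) (key1 φ hφ θ c i x hx)]
  rw [fderivWithin_fun_sum hU (fun a _ => ((hpd φ hφ i a) x hx).const_mul (θ a))]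
  simp only [ContinuousLinearMap.coe_sum', Finset.sum_apply]
  refine Finset.sum_congr rfl fun a _ => ?_
  rw [fderivWithin_const_mul hU ((hpd φ hφ i a) x hx)]
  simp only [ContinuousLinearMap.smul_apply, smul_eq_mul]
  rfl

end deriv

lemma quadform {d N : ℕ} (v : Fin d → Fin N → ℝ) (y : Fin N → ℝ) :
    (∑ a, y a * ∑ b, (∑ i, v i a * v i b) * y b) = ∑ i, (∑ a, v i a * y a)^2 := by
  have h1 : ∀ i : Fin d, (∑ a, v i a * y a)^2 = ∑ a, ∑ b, (v i a * y a) * (v i b * y b) := by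
    intro i; rw [sq, Finset.sum_mul_sum]
  simp only [h1, Finset.mul_sum, Finset.sum_mul]
  rw [swap3 (fun a b i => y a * (v i a * v i b * y b))]
  exact Finset.sum_congr rfl fun _ _ => Finset.sum_congr rfl fun _ _ =>
    Finset.sum_congr rfl fun _ _ => by ring

lemma psd {d N : ℕ} (v : Fin d → Fin N → ℝ) :
    (Matrix.of fun a b : Fin N => ∑ i, v i a * v i b).PosSemidef := by
  rw [Matrix.posSemidef_iff_dotProduct_mulVec]
  constructor
  · ext a b
    simp only [Matrix.conjTranspose_apply, Matrix.of_apply, star_trivial]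
    exact Finset.sum_congr rfl fun _ _ => mul_comm _ _
  · intro y
    have : dotProduct (star y) ((Matrix.of fun a b : Fin N => ∑ i, v i a * v i b).mulVec y)
        = ∑ i, (∑ a, v i a * y a)^2 := by
      simp only [dotProduct, Matrix.mulVec, Matrix.of_apply, star_trivial,
        Pi.star_apply]
      exact quadform v y
    rw [this]
    exact Finset.sum_nonneg fun i _ => sq_nonneg _


/-- Second part of Proposition 1: for the exponential family
`q_θ(x) = exp(⟨θ, φ(x)⟩ + c)` on `[0,1]^d` with `φ` twice continuously differentiable,
the bounded-domain Hyvärinen score is `h(x,q_θ) = (1/2) θᵀ Ã(x) θ + K(x)ᵀθ` with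
`a_i(x) = x_i(1−x_i) ∂_i φ(x)`, `Ã(x) = ∑ i a_i(x) a_i(x)ᵀ` positive semidefinite, and
`K(x) = ∑ i [ −2(2x_i−1)x_i(1−x_i) ∂_i φ + x_i²(1−x_i)² ∂_i² φ ]`. -/
theorem stmt4 {d N : ℕ} (φ : (Fin d → ℝ) → Fin N → ℝ)
    (hφ : ContDiffOn ℝ 2 φ (Set.Icc 0 1)) (θ : Fin N → ℝ) (c : ℝ) :
    (∀ x ∈ Set.Icc (0 : Fin d → ℝ) 1,
      hScoreW (fun y => Real.exp ((∑ a : Fin N, θ a * φ y a) + c)) x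
        = (1/2) * (∑ a : Fin N, ∑ b : Fin N,
              θ a * (∑ i : Fin d,
                (x i * (1 - x i) * pdW i (fun y => φ y a) x)
                  * (x i * (1 - x i) * pdW i (fun y => φ y b) x)) * θ b)
          + ∑ a : Fin N,
              (∑ i : Fin d,
                (-2 * (2 * x i - 1) * (x i) * (1 - x i) * pdW i (fun y => φ y a) x
                  + (x i)^2 * (1 - x i)^2 * pdW i (pdW i (fun y => φ y a)) x)) * θ a)
    ∧ (∀ x ∈ Set.Icc (0 : Fin d → ℝ) 1,
        (Matrix.of fun a b : Fin N =>
          ∑ i : Fin d,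
            (x i * (1 - x i) * pdW i (fun y => φ y a) x)
              * (x i * (1 - x i) * pdW i (fun y => φ y b) x)).PosSemidef) := by
  constructor
  · intro x hx
    have expand : hScoreW (fun y => Real.exp ((∑ a : Fin N, θ a * φ y a) + c)) x
        = ∑ i : Fin d,
          ((1/2) * (x i)^2 * (1 - x i)^2
              * (∑ a : Fin N, θ a * pdW i (fun y => φ y a) x)^2
            - 2 * (2 * x i - 1) * (x i) * (1 - x i)
              * (∑ a : Fin N, θ a * pdW i (fun y => φ y a) x)
            + (x i)^2 * (1 - x i)^2
              * (∑ a : Fin N, θ a * pdW i (pdW i (fun y => φ y a)) x)) := by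
      unfold hScoreW
      refine Finset.sum_congr rfl fun i _ => ?_
      rw [show (fun y => Real.log ((fun y => Real.exp ((∑ a : Fin N, θ a * φ y a) + c)) y))
          = fun z => Real.log (Real.exp ((∑ a : Fin N, θ a * φ z a) + c)) from rfl,
        key1 φ hφ θ c i x hx, key2 φ hφ θ c i hx]
    rw [expand]
    exact bigalg x θ (fun i a => pdW i (fun y => φ y a) x)
      (fun i a => pdW i (pdW i (fun y => φ y a)) x)
  · intro x hx
    exact psd (fun i a => x i * (1 - x i) * pdW i (fun y => φ y a) x)
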